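/- If φ is a continuous semiflow on a compact metric space, then for all α > 0 there exists β > 0 such that for all ε < α/2, δ < β, T > 0 and x ∈ X, the modified ball B̂(x,φ,T,ε,δ) is contained in the Bowen ball B(x,φ,T,α). -/
import Mathlib


open Set Filter
open scoped ENNReal NNReal Classical Real


open Set Filter

variable {α : Type*}

/-- A (not necessarily continuous) semiflow on `α`, parameterized by nonnegative real times. -/
def IsSemiflow (φ : ℝ → α → α) : Prop :=
  (∀ x, φ 0 x = x) ∧ ∀ s t : ℝ, 0 ≤ s → 0 ≤ t → ∀ x, φ (s + t) x = φ s (φ t x)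

/-- A continuous semiflow. -/
def IsContSemiflow [TopologicalSpace α] (φ : ℝ → α → α) : Prop :=
  IsSemiflow φ ∧ ContinuousOn (fun p : ℝ × α => φ p.1 p.2) (Set.Ici 0 ×ˢ Set.univ)

/-- The pseudosemimetric `d_δ^φ(x,y) = inf { d(φ_s x, φ_s y) : s ∈ [0,δ) }`. -/
noncomputable def dDelta (d : α → α → ℝ) (φ : ℝ → α → α) (δ : ℝ) (x y : α) : ℝ :=
  sInf ((fun s => d (φ s x) (φ s y)) '' Set.Ico 0 δ)

/-- The modified dynamical ball `B̂(x,φ,T,ε,δ)`. -/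
def ballHat (d : α → α → ℝ) (φ : ℝ → α → α) (T ε δ : ℝ) (x : α) : Set α :=
  {y | ∀ t ∈ Set.Icc (0:ℝ) T, dDelta d φ δ (φ t x) (φ t y) < ε}

/-- The classical Bowen dynamical ball `B(x,φ,T,ε)`. -/
def ballB (d : α → α → ℝ) (φ : ℝ → α → α) (T ε : ℝ) (x : α) : Set α :=
  {y | ∀ t ∈ Set.Icc (0:ℝ) T, d (φ t x) (φ t y) < ε}

/-- `(φ,T,ε,δ)`-separated set. -/
def sepHat (d : α → α → ℝ) (φ : ℝ → α → α) (T ε δ : ℝ) (E : Set α) : Prop :=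
  ∀ x ∈ E, E ∩ ballHat d φ T ε δ x = {x}

/-- `(φ,T,ε,δ)`-spanning set for the subset `S`. -/
def spanHat (d : α → α → ℝ) (φ : ℝ → α → α) (S : Set α) (T ε δ : ℝ) (F : Set α) : Prop :=
  F ⊆ S ∧ S ⊆ ⋃ y ∈ F, ballHat d φ T ε δ y

/-- Classical `(φ,T,ε)`-separated set. -/
def sepB (d : α → α → ℝ) (φ : ℝ → α → α) (T ε : ℝ) (E : Set α) : Prop :=
  ∀ x ∈ E, E ∩ ballB d φ T ε x = {x}

/-- Classical `(φ,T,ε)`-spanning set for the subset `S`. -/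
def spanB (d : α → α → ℝ) (φ : ℝ → α → α) (S : Set α) (T ε : ℝ) (F : Set α) : Prop :=
  F ⊆ S ∧ S ⊆ ⋃ y ∈ F, ballB d φ T ε y

/-- `ŝ(φ,T,ε,δ)`: sup of cardinalities of separated subsets of `S`. -/
noncomputable def sHat (d : α → α → ℝ) (φ : ℝ → α → α) (S : Set α) (T ε δ : ℝ) : ℕ∞ :=
  ⨆ (E : Set α) (_ : E ⊆ S ∧ sepHat d φ T ε δ E), E.encard

/-- `r̂(φ,T,ε,δ)`: inf of cardinalities of spanning sets. -/
noncomputable def rHat (d : α → α → ℝ) (φ : ℝ → α → α) (S : Set α) (T ε δ : ℝ) : ℕ∞ :=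
  ⨅ (F : Set α) (_ : spanHat d φ S T ε δ F), F.encard

noncomputable def sB (d : α → α → ℝ) (φ : ℝ → α → α) (S : Set α) (T ε : ℝ) : ℕ∞ :=
  ⨆ (E : Set α) (_ : E ⊆ S ∧ sepB d φ T ε E), E.encard

noncomputable def rB (d : α → α → ℝ) (φ : ℝ → α → α) (S : Set α) (T ε : ℝ) : ℕ∞ :=
  ⨅ (F : Set α) (_ : spanB d φ S T ε F), F.encard

/-- Extended logarithm on `ℕ∞`, with `log ∞ = ∞` and `log 0 = -∞`. -/
noncomputable def elog (x : ℕ∞) : EReal :=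
  if x = ⊤ then ⊤ else if x = 0 then ⊥ else ((Real.log (x.toNat : ℝ) : ℝ) : EReal)

/-- Exponential growth rate `limsup_{T→∞} (1/T) log f(T)`. -/
noncomputable def rate (f : ℝ → ℕ∞) : EReal :=
  Filter.limsup (fun T : ℝ => ((T⁻¹ : ℝ) : EReal) * elog (f T)) Filter.atTop

/-- The modified separated-set entropy `ĥ_s(φ)` (on the subset `S`); since the quantities are
monotone in `ε` and `δ`, the limits `ε → 0⁺`, `δ → 0⁺` are suprema. -/
noncomputable def hHatS (d : α → α → ℝ) (φ : ℝ → α → α) (S : Set α) : EReal :=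
  ⨆ (δ : ℝ) (_ : 0 < δ) (ε : ℝ) (_ : 0 < ε), rate (fun T => sHat d φ S T ε δ)

/-- The modified spanning-set entropy `ĥ_r(φ)`. -/
noncomputable def hHatR (d : α → α → ℝ) (φ : ℝ → α → α) (S : Set α) : EReal :=
  ⨆ (δ : ℝ) (_ : 0 < δ) (ε : ℝ) (_ : 0 < ε), rate (fun T => rHat d φ S T ε δ)

/-- Bowen's classical separated-set entropy `h_s(φ)`. -/
noncomputable def hSB (d : α → α → ℝ) (φ : ℝ → α → α) (S : Set α) : EReal :=
  ⨆ (ε : ℝ) (_ : 0 < ε), rate (fun T => sB d φ S T ε)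

/-- Bowen's classical spanning-set entropy `h_r(φ)`. -/
noncomputable def hRB (d : α → α → ℝ) (φ : ℝ → α → α) (S : Set α) : EReal :=
  ⨆ (ε : ℝ) (_ : 0 < ε), rate (fun T => rB d φ S T ε)


/-- For a continuous semiflow on a compact metric space: for all `α > 0`
there is `β > 0` such that for all `0 < ε < α/2`, `0 < δ < β`, `T > 0` and `x`, the modified
ball `B̂(x,φ,T,ε,δ)` is contained in the Bowen ball `B(x,φ,T,α)`. -/
theorem stmt4 {X : Type*} [MetricSpace X] [CompactSpace X] (φ : ℝ → X → X)
    (hφ : IsContSemiflow φ) :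
    ∀ a : ℝ, 0 < a → ∃ β : ℝ, 0 < β ∧
      ∀ ε δ T : ℝ, 0 < ε → ε < a / 2 → 0 < δ → δ < β → 0 < T →
        ∀ x : X, ballHat dist φ T ε δ x ⊆ ballB dist φ T a x := by

  intro a ha
  obtain ⟨hsf, hcont⟩ := hφ
  have hK : IsCompact ((Set.Icc (0:ℝ) 1) ×ˢ (Set.univ : Set X)) :=
    isCompact_Icc.prod isCompact_univ
  have hc : ContinuousOn (fun p : ℝ × X => φ p.1 p.2) (Set.Icc (0:ℝ) 1 ×ˢ Set.univ) :=
    hcont.mono (fun p hp => ⟨hp.1.1, trivial⟩)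
  have huc := hK.uniformContinuousOn_of_continuous hc
  rw [Metric.uniformContinuousOn_iff] at huc
  obtain ⟨β, hβ, hβ'⟩ := huc (a/4) (by linarith)
  refine ⟨min β 1, lt_min hβ one_pos, ?_⟩
  intro ε δ T hε hεa hδ hδβ hT x y hy t ht
  have hne : ((fun s => dist (φ s (φ t x)) (φ s (φ t y))) '' Set.Ico 0 δ).Nonempty :=
    ⟨_, ⟨0, ⟨le_refl _, hδ⟩, rfl⟩⟩
  have hinf := hy t ht
  rw [dDelta] at hinf
  obtain ⟨_, ⟨s, hs, rfl⟩, hlt⟩ := exists_lt_of_csInf_lt hne hinf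
  have hsβ : s < β := lt_of_lt_of_le (hs.2.trans hδβ) (min_le_left _ _)
  have hs1 : s ∈ Set.Icc (0:ℝ) 1 :=
    ⟨hs.1, le_of_lt (lt_of_lt_of_le (hs.2.trans hδβ) (min_le_right _ _))⟩
  have key : ∀ z : X, dist (φ s z) z < a/4 := by
    intro z
    have h0 : ((0:ℝ), z) ∈ Set.Icc (0:ℝ) 1 ×ˢ (Set.univ : Set X) :=
      ⟨⟨le_refl _, zero_le_one⟩, trivial⟩
    have hsz : ((s:ℝ), z) ∈ Set.Icc (0:ℝ) 1 ×ˢ (Set.univ : Set X) := ⟨hs1, trivial⟩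
    have hdp : dist ((s:ℝ), z) ((0:ℝ), z) < β := by
      rw [Prod.dist_eq]
      simpa [Real.dist_eq, abs_of_nonneg hs.1] using ⟨hsβ, hβ⟩
    have := hβ' _ hsz _ h0 hdp
    simpa [hsf.1 z] using this
  have hxx : dist (φ t x) (φ s (φ t x)) < a/4 := by
    have := key (φ t x); rwa [dist_comm] at this
  have hyy : dist (φ s (φ t y)) (φ t y) < a/4 := key (φ t y)
  calc dist (φ t x) (φ t y)
      ≤ dist (φ t x) (φ s (φ t x)) + dist (φ s (φ t x)) (φ s (φ t y))
        + dist (φ s (φ t y)) (φ t y) := dist_triangle4 _ _ _ _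
    _ < a/4 + ε + a/4 := by linarith
    _ < a := by linarith
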